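/- Fix a real number p with 0 < p < 1. For every k ∈ ℕ and every state (a,b) with a + 1 ≤ b + 1 (i.e., a < b + 1), the optimal gain of the strategic miner in the immediate-release game is nondecreasing in the length of his own branch: g_k(a+1, b) ≥ g_k(a, b). -/

import Mathlib

noncomputable def gain (p : ℝ) : ℕ → ℕ → ℕ → ℝ
  | 0, _, _ => 0
  | k + 1, a, b =>
    if h : b + 1 ≤ a then
      gain p k 0 0 + (b + 1 : ℕ)
    else
      ((List.range b).attach.map (fun s => gain p (k + 1) 0 s.1)).foldr max
        (p * gain p (k + 1) (a + 1) b + (1 - p) * gain p k a (b + 1))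
termination_by k a b => (k, b, b + 1 - a)
decreasing_by
  all_goals
    first
      | exact Prod.Lex.left _ _ (Nat.lt_succ_self _)
      | exact Prod.Lex.right _ (Prod.Lex.right _ (by omega))
      | exact Prod.Lex.right _ (Prod.Lex.left _ _ (List.mem_range.mp s.2))

lemma gain_zero (p : ℝ) (a b : ℕ) : gain p 0 a b = 0 := by rw [gain]

lemma gain_win (p : ℝ) (k a b : ℕ) (h : b + 1 ≤ a) :
    gain p (k+1) a b = gain p k 0 0 + ((b : ℝ) + 1) := by
  rw [gain, dif_pos h]; push_cast; ring

lemma gain_else (p : ℝ) (k a b : ℕ) (h : ¬ b + 1 ≤ a) :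
    gain p (k+1) a b = ((List.range b).attach.map (fun s => gain p (k + 1) 0 s.1)).foldr max
        (p * gain p (k + 1) (a + 1) b + (1 - p) * gain p k a (b + 1)) := by
  rw [gain, dif_neg h]

lemma foldr_max_base (b : ℝ) (l : List ℝ) : b ≤ l.foldr max b := by
  induction l with
  | nil => exact le_refl _
  | cons x t ih => exact ih.trans (le_max_right x _)

lemma mem_le_foldr {x : ℝ} {l : List ℝ} (hx : x ∈ l) (b : ℝ) : x ≤ l.foldr max b := by
  induction l with
  | nil => simp at hx
  | cons y t ih =>
    rcases List.mem_cons.mp hx with h | h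
    · subst h; exact le_max_left _ _
    · exact (ih h).trans (le_max_right _ _)

lemma foldr_max_le {c b : ℝ} {l : List ℝ} (hb : b ≤ c) (h : ∀ x ∈ l, x ≤ c) :
    l.foldr max b ≤ c := by
  induction l with
  | nil => exact hb
  | cons y t ih =>
    exact max_le (h y List.mem_cons_self) (ih fun x hx => h x (List.mem_cons_of_mem _ hx))

lemma foldr_max_mono {b b' : ℝ} (l : List ℝ) (h : b ≤ b') :
    l.foldr max b ≤ l.foldr max b' := by
  induction l with
  | nil => exact h
  | cons y t ih => exact max_le_max le_rfl ih

lemma opt_mem (p : ℝ) (k : ℕ) {s b : ℕ} (hs : s < b) :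
    gain p (k+1) 0 s ∈ (List.range b).attach.map (fun s => gain p (k + 1) 0 s.1) :=
  List.mem_map.mpr ⟨⟨s, List.mem_range.mpr hs⟩, List.mem_attach _ _, rfl⟩

/-- the value at a non-win state is at least each capitulation option -/
lemma opt_le_gain (p : ℝ) (k a b : ℕ) (hab : ¬ b + 1 ≤ a) {s : ℕ} (hs : s < b) :
    gain p (k+1) 0 s ≤ gain p (k+1) a b := by
  rw [gain_else p k a b hab]
  exact mem_le_foldr (opt_mem p k hs) _

/-- the value at a non-win state is at least the mining continuation -/
lemma base_le_gain (p : ℝ) (k a b : ℕ) (hab : ¬ b + 1 ≤ a) :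
    p * gain p (k + 1) (a + 1) b + (1 - p) * gain p k a (b + 1) ≤ gain p (k+1) a b := by
  rw [gain_else p k a b hab]
  exact foldr_max_base _ _

mutual

/-- monotone in own branch -/
theorem claimM (p : ℝ) (hp0 : 0 < p) (hp1 : p < 1) (k B a : ℕ) (h : a ≤ B) :
    gain p k a B ≤ gain p k (a+1) B := by
  match k with
  | 0 => rw [gain_zero, gain_zero]
  | (k'+1) =>
    rcases lt_or_eq_of_le h with hlt | heq
    · -- a < B
      have h1 : gain p (k'+1) (a+1) B ≤ gain p (k'+1) (a+2) B :=
        claimM p hp0 hp1 (k'+1) B (a+1) (by omega)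
      have h2 : gain p k' a (B+1) ≤ gain p k' (a+1) (B+1) :=
        claimM p hp0 hp1 k' (B+1) a (by omega)
      rw [gain_else p k' (a+1) B (by omega), gain_else p k' a B (by omega)]
      apply foldr_max_mono
      have m1 := mul_le_mul_of_nonneg_left h1 hp0.le
      have m2 := mul_le_mul_of_nonneg_left h2 (by linarith : (0:ℝ) ≤ 1 - p)
      have : a + 1 + 1 = a + 2 := by omega
      rw [this]
      linarith
    · -- a = B
      subst heq
      have hwin : gain p (k'+1) (a+1) a = gain p k' 0 0 + ((a:ℝ) + 1) :=
        gain_win p k' (a+1) a (by omega)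
      rw [gain_else p k' a a (by omega)]
      apply foldr_max_le
      · -- base ≤ win value
        have hX : gain p k' a (a+1) ≤ gain p k' 0 0 + (a:ℝ) + 1 := by
          have h1 : gain p k' a (a+1) ≤ gain p k' 0 ((a+1) - a) + (a:ℕ) :=
            claimD p hp0 hp1 k' a (a+1) (by omega)
          have h2 : gain p k' 0 1 ≤ gain p k' 0 0 + ((1:ℕ):ℝ) := claimS p hp0 hp1 k' 1
          have he : (a+1) - a = 1 := by omega
          rw [he] at h1
          push_cast at h1 h2 ⊢
          linarith
        rw [hwin]
        nlinarith [hX, hp0.le, (by linarith : (0:ℝ) ≤ 1 - p)]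
      · intro x hx
        rcases List.mem_map.mp hx with ⟨⟨s, hs⟩, -, rfl⟩
        have hsB : s < a := List.mem_range.mp hs
        have h1 : gain p (k'+1) 0 s ≤ gain p (k'+1) 0 0 + ((s:ℕ):ℝ) := claimS p hp0 hp1 (k'+1) s
        have h2 : gain p (k'+1) 0 0 ≤ gain p k' 0 0 + 1 := claimT p hp0 hp1 k'
        show gain p (k'+1) 0 s ≤ gain p (k'+1) (a+1) a
        rw [hwin]
        have hsa : (s:ℝ) + 1 ≤ (a:ℝ) := by exact_mod_cast hsB
        push_cast at h1
        linarith
termination_by (k, B, B + 1 - a)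

/-- diagonal shift: one fewer block on each branch costs at most 1 -/
theorem claimE (p : ℝ) (hp0 : 0 < p) (hp1 : p < 1) (k B A : ℕ)
    (hA : 1 ≤ A) (hAB : A ≤ B + 1) (hB : 1 ≤ B) :
    gain p k A B ≤ gain p k (A-1) (B-1) + 1 := by
  match k with
  | 0 => rw [gain_zero, gain_zero]; norm_num
  | (k'+1) =>
    rcases eq_or_lt_of_le hAB with heq | hlt
    · -- A = B + 1 : both sides are wins
      subst heq
      rw [gain_win p k' (B+1) B (by omega), Nat.add_sub_cancel,
        gain_win p k' B (B-1) (by omega)]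
      have hc : ((B - 1 : ℕ) : ℝ) = (B:ℝ) - 1 := by
        have h1 : (1:ℕ) ≤ B := hB
        push_cast [h1]; ring
      rw [hc]; linarith
    · -- A ≤ B
      have hAB' : A ≤ B := by omega
      have hA1 : A - 1 + 1 = A := by omega
      have hB1 : B - 1 + 1 = B := by omega
      rw [gain_else p k' A B (by omega)]
      apply foldr_max_le
      · -- base
        have h1 : gain p (k'+1) (A+1) B ≤ gain p (k'+1) A (B-1) + 1 := by
          have := claimE p hp0 hp1 (k'+1) B (A+1) (by omega) (by omega) hB
          simpa [Nat.add_sub_cancel] using this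
        have h2 : gain p k' A (B+1) ≤ gain p k' (A-1) B + 1 := by
          have := claimE p hp0 hp1 k' (B+1) A hA (by omega) (by omega)
          simpa [Nat.add_sub_cancel] using this
        have hbase : p * gain p (k' + 1) A (B-1) + (1 - p) * gain p k' (A-1) B ≤
            gain p (k'+1) (A-1) (B-1) := by
          have := base_le_gain p k' (A-1) (B-1) (by omega)
          rwa [hA1, hB1] at this
        have m1 := mul_le_mul_of_nonneg_left h1 hp0.le
        have m2 := mul_le_mul_of_nonneg_left h2 (by linarith : (0:ℝ) ≤ 1 - p)
        nlinarith [m1, m2, hbase]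
      · intro x hx
        rcases List.mem_map.mp hx with ⟨⟨s, hs⟩, -, rfl⟩
        have hsB : s < B := List.mem_range.mp hs
        show gain p (k'+1) 0 s ≤ gain p (k'+1) (A-1) (B-1) + 1
        rcases lt_or_ge s (B-1) with hslt | hsge
        · -- s < B - 1 : it is an option of the RHS state
          have := opt_le_gain p k' (A-1) (B-1) (by omega) hslt
          linarith
        · -- s = B - 1
          have hseq : s = B - 1 := by omega
          rcases Nat.lt_or_ge B 2 with hB2 | hB2
          · -- B = 1, so A = 1, s = 0: both sides are gain (k'+1) 0 0
            have e1 : s = 0 := by omega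
            have e2 : A - 1 = 0 := by omega
            have e3 : B - 1 = 0 := by omega
            rw [e1, e2, e3]
            linarith
          · -- B ≥ 2
            have h1 : gain p (k'+1) 0 (B-1) ≤ gain p (k'+1) 1 (B-1) :=
              claimM p hp0 hp1 (k'+1) (B-1) 0 (by omega)
            have h2 : gain p (k'+1) 1 (B-1) ≤ gain p (k'+1) 0 (B-1-1) + 1 := by
              have := claimE p hp0 hp1 (k'+1) (B-1) 1 le_rfl (by omega) (by omega)
              simpa using this
            have h3 : gain p (k'+1) 0 (B-1-1) ≤ gain p (k'+1) (A-1) (B-1) :=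
              opt_le_gain p k' (A-1) (B-1) (by omega) (by omega)
            rw [hseq]
            linarith
termination_by (k, B, B + 2 - A)

/-- each extra honest block at the start is worth at most 1 -/
theorem claimS (p : ℝ) (hp0 : 0 < p) (hp1 : p < 1) (k s : ℕ) :
    gain p k 0 s ≤ gain p k 0 0 + ((s:ℕ):ℝ) := by
  match s with
  | 0 => simp
  | (s'+1) =>
    have h1 : gain p k 0 (s'+1) ≤ gain p k 1 (s'+1) :=
      claimM p hp0 hp1 k (s'+1) 0 (by omega)
    have h2 : gain p k 1 (s'+1) ≤ gain p k 0 s' + 1 := by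
      have := claimE p hp0 hp1 k (s'+1) 1 le_rfl (by omega) (by omega)
      simpa using this
    have h3 : gain p k 0 s' ≤ gain p k 0 0 + ((s':ℕ):ℝ) := claimS p hp0 hp1 k s'
    push_cast at h3 ⊢
    linarith
termination_by (k, s, s + 3)

/-- one extra level is worth at most 1 from (0,0) -/
theorem claimT (p : ℝ) (hp0 : 0 < p) (hp1 : p < 1) (k : ℕ) :
    gain p (k+1) 0 0 ≤ gain p k 0 0 + 1 := by
  rw [gain_else p k 0 0 (by omega)]
  simp only [List.range_zero, List.attach_nil, List.map_nil, List.foldr_nil]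
  rw [gain_win p k 1 0 (by omega)]
  have h2 : gain p k 0 1 ≤ gain p k 0 0 + ((1:ℕ):ℝ) := claimS p hp0 hp1 k 1
  push_cast at h2
  norm_num
  nlinarith [h2, hp0.le, (by linarith : (0:ℝ) ≤ 1 - p)]
termination_by (k+1, 0, 0)

/-- sliding down the diagonal -/
theorem claimD (p : ℝ) (hp0 : 0 < p) (hp1 : p < 1) (k A B : ℕ) (h : A ≤ B) :
    gain p k A B ≤ gain p k 0 (B - A) + ((A:ℕ):ℝ) := by
  match A with
  | 0 => simp
  | (A'+1) =>
    have h1 : gain p k (A'+1) B ≤ gain p k A' (B-1) + 1 := by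
      have := claimE p hp0 hp1 k B (A'+1) (by omega) (by omega) (by omega)
      simpa using this
    have h2 : gain p k A' (B-1) ≤ gain p k 0 ((B-1) - A') + ((A':ℕ):ℝ) :=
      claimD p hp0 hp1 k A' (B-1) (by omega)
    have he : (B-1) - A' = B - (A'+1) := by omega
    rw [he] at h2
    push_cast at h2 ⊢
    linarith
termination_by (k, B, B + 3 - A)

end

/-- The strategic miner's optimal gain in the immediate-release game is
nondecreasing in the length of his own branch: for every `k` and every state
`(a, b)` with `a + 1 ≤ b + 1`, we have `g_k(a+1, b) ≥ g_k(a, b)`. -/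
theorem gain_mono_in_own_branch (p : ℝ) (hp0 : 0 < p) (hp1 : p < 1) :
    ∀ (k a b : ℕ), a < b + 1 → gain p k a b ≤ gain p k (a + 1) b := by
  intro k a b h
  exact claimM p hp0 hp1 k b a (by omega)
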